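/- Every $d$-dimensional polystochastic matrix of order $3$, for every $d \geq 2$, has a strictly positive permanent. -/

import Mathlib

open Function

lemma aff1 : ∀ f : ZMod 3 → ZMod 3, Function.Injective f →
    (f 1 - f 0 ≠ 0 ∧ ∀ t, f t = f 0 + (f 1 - f 0) * t) := by decide

lemma lin : ∀ (m : ℕ) (h : (Fin m → ZMod 3) → ZMod 3),
    (∀ p j, Function.Injective (fun x => h (Function.update p j x))) →
    ∃ (c : ZMod 3) (ε : Fin m → ZMod 3), (∀ j, ε j ≠ 0) ∧ ∀ p, h p = c + ∑ j, ε j * p j := by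
  intro m
  induction m with
  | zero =>
    intro h _
    refine ⟨h (fun i => i.elim0), (fun i => i.elim0), fun j => j.elim0, fun p => ?_⟩
    have hp : p = fun i => i.elim0 := funext fun i => i.elim0
    subst hp
    simp
  | succ m ih =>
    intro h hl
    haveI : Fact (Nat.Prime 3) := ⟨by norm_num⟩
    have hslice : ∀ t : ZMod 3, ∃ c, ∃ ε : Fin m → ZMod 3, (∀ j, ε j ≠ 0) ∧
        ∀ q, h (Fin.snoc q t) = c + ∑ j, ε j * q j := by
      intro t
      apply ih
      intro p j x y hxy
      simp only at hxy
      rw [Fin.snoc_update, Fin.snoc_update] at hxy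
      exact hl (Fin.snoc p t) j.castSucc hxy
    choose c ε hε hrep using hslice
    have hlast : ∀ q : Fin m → ZMod 3, Function.Injective (fun t => h (Fin.snoc q t)) := by
      intro q x y hxy
      have := hl (Fin.snoc q x) (Fin.last m)
      apply this
      simp only [Fin.update_snoc_last]
      simpa using hxy
    have hεconst : ∀ t, ε t = ε 0 := by
      intro t
      by_cases ht : t = 0
      · rw [ht]
      by_contra hne
      have hj : ∃ j, ε t j ≠ ε 0 j := by
        by_contra h'
        push_neg at h'
        exact hne (funext h')
      obtain ⟨j, hj⟩ := hj
      have hne' : ε t j - ε 0 j ≠ 0 := sub_ne_zero_of_ne hj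
      set u : ZMod 3 := (c 0 - c t) * (ε t j - ε 0 j)⁻¹ with hu
      set q : Fin m → ZMod 3 := Pi.single j u with hq
      have hsum : ∀ tt, ∑ i, ε tt i * q i = ε tt j * u := by
        intro tt
        rw [Finset.sum_eq_single j]
        · rw [hq]; simp
        · intro b _ hb
          rw [hq]
          simp [Pi.single_eq_of_ne hb]
        · simp
      have heq : h (Fin.snoc q t) = h (Fin.snoc q 0) := by
        rw [hrep, hrep, hsum, hsum]
        have key : ε t j * u - ε 0 j * u = c 0 - c t := by
          rw [← sub_mul, hu, ← mul_assoc, mul_comm (ε t j - ε 0 j), mul_assoc,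
            mul_inv_cancel₀ hne', mul_one]
        linear_combination key
      exact ht (hlast q heq)
    set p0 : Fin m → ZMod 3 := fun _ => 0 with hp0
    set π : ZMod 3 → ZMod 3 := fun t => h (Fin.snoc p0 t) with hπ
    have hπinj : Function.Injective π := hlast p0
    obtain ⟨hγ, hπrep⟩ := aff1 π hπinj
    have hcπ : ∀ t, c t = π t := by
      intro t
      have := hrep t p0
      simp [hp0] at this
      rw [hπ]
      exact this.symm
    refine ⟨π 0, Fin.snoc (ε 0) (π 1 - π 0), ?_, ?_⟩
    · intro j
      refine Fin.lastCases ?_ ?_ j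
      · simpa using hγ
      · intro i
        simpa using hε 0 i
    · intro p
      conv_lhs => rw [← Fin.snoc_init_self p]
      rw [hrep, Fin.sum_univ_castSucc]
      simp only [Fin.snoc_castSucc, Fin.snoc_last]
      rw [hcπ, hπrep (p (Fin.last m)), hεconst]
      have hinit : ∀ j : Fin m, Fin.init p j = p j.castSucc := fun j => rfl
      have : ∑ j : Fin m, ε 0 j * Fin.init p j = ∑ j : Fin m, ε 0 j * p j.castSucc := by
        apply Finset.sum_congr rfl
        intro j _
        rw [hinit]
      rw [this]
      ring

open Function

-- small decidable facts about ZMod 3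
lemma zm3_cases : ∀ a : ZMod 3, a = 0 ∨ a = 1 ∨ a = 2 := by decide
lemma zm3_third : ∀ a b : ZMod 3, a ≠ b → (a ≠ -a-b ∧ b ≠ -a-b) := by decide
lemma zm3_add : ∀ a : ZMod 3, a + 1 ≠ a ∧ a + 2 ≠ a ∧ a + 1 ≠ a + 2 := by decide
set_option synthInstance.maxSize 1000 in
lemma zm3_perm3 : ∀ x y z : ZMod 3, x ≠ y → y ≠ z → x ≠ z →
    (x = 0 ∧ y = 1 ∧ z = 2) ∨ (x = 0 ∧ y = 2 ∧ z = 1) ∨ (x = 1 ∧ y = 0 ∧ z = 2) ∨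
    (x = 1 ∧ y = 2 ∧ z = 0) ∨ (x = 2 ∧ y = 0 ∧ z = 1) ∨ (x = 2 ∧ y = 1 ∧ z = 0) := by decide
lemma zm3_shift : ∀ a b : ZMod 3, b ≠ 0 → (a ≠ a + b ∧ a + b ≠ a + 2*b ∧ a ≠ a + 2*b) := by decide
lemma zm3_shift2 : ∀ a b : ZMod 3, b ≠ 0 → (a + b ≠ a ∧ a - b ≠ a ∧ a + b ≠ a - b) := by decide
lemma zm3_cover : ∀ s w c : ZMod 3, w ≠ 0 → s ≠ c → (s + w = c ∨ s - w = c) := by decide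
lemma zm3_two : ∀ w : ZMod 3, w ≠ 0 → ∀ s : ZMod 3, s + w ≠ s - w := by decide

lemma f3_cases : ∀ a : Fin 3, a = 0 ∨ a = 1 ∨ a = 2 := by decide
lemma inj3 : ∀ f : Fin 3 → Fin 3, f 0 ≠ f 1 → f 1 ≠ f 2 → f 0 ≠ f 2 → Function.Injective f := by
  decide
lemma zm3_mem : ∀ S b0 b1 c : ZMod 3, (b1 = c + S - b0 - b1 ↔ S - b0 + b1 = -c) := by decide
lemma zm3_012 : (0:ZMod 3) ≠ 1 ∧ (1:ZMod 3) ≠ 2 ∧ (0:ZMod 3) ≠ 2 := by decide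
lemma zm3_2ne0 : (2:ZMod 3) ≠ 0 := by decide
lemma zm3_12 : (1:ZMod 3) * 2 = 1 + 1 := by decide

lemma delta6 (d : ℕ) (i0 j₁ : Fin d) (hne : j₁ ≠ i0) (μ : Fin d → ZMod 3) (hμ0 : μ i0 = 0)
    (hμ : ∀ j, j ≠ i0 → μ j ≠ 0) :
    ∃ δ : Fin d → ZMod 3, δ i0 = 0 ∧ (∀ j, j ≠ i0 → δ j ≠ 0) ∧ ∑ j, μ j * δ j ≠ 0 := by
  haveI : Fact (Nat.Prime 3) := ⟨by norm_num⟩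
  set δ₁ : Fin d → ZMod 3 := fun j => if j = i0 then 0 else (μ j)⁻¹ with hδ₁
  have hterm : ∀ j, μ j * δ₁ j = if j = i0 then 0 else 1 := by
    intro j
    by_cases hj : j = i0
    · simp [hδ₁, hj]
    · simp only [hδ₁, hj, if_false]
      exact mul_inv_cancel₀ (hμ j hj)
  by_cases hs : ∑ j, μ j * δ₁ j ≠ 0
  · refine ⟨δ₁, by simp [hδ₁], ?_, hs⟩
    intro j hj
    simp only [hδ₁, hj, if_false]
    exact inv_ne_zero (hμ j hj)
  · push_neg at hs
    set δ₂ : Fin d → ZMod 3 := fun j => if j = i0 then 0 else if j = j₁ then 2 * (μ j)⁻¹ else (μ j)⁻¹ with hδ₂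
    have hterm2 : ∀ j, μ j * δ₂ j = (μ j * δ₁ j) + (if j = j₁ then 1 else 0) := by
      intro j
      by_cases hj : j = i0
      · subst hj
        simp [hδ₂, hδ₁, hμ0, Ne.symm hne]
      · by_cases hjj : j = j₁
        · rw [hδ₂, hδ₁]
          simp only [if_neg hj, if_pos hjj]
          rw [mul_comm (2:ZMod 3) ((μ j)⁻¹), ← mul_assoc, mul_inv_cancel₀ (hμ j hj)]
          exact zm3_12
        · simp [hδ₂, hδ₁, hj, hjj]
    refine ⟨δ₂, by simp [hδ₂], ?_, ?_⟩
    · intro j hj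
      by_cases hjj : j = j₁
      · rw [hδ₂]
        simp only [if_neg hj, if_pos hjj]
        exact mul_ne_zero zm3_2ne0 (inv_ne_zero (hμ _ hj))
      · simp only [hδ₂, hj, hjj, if_false]
        exact inv_ne_zero (hμ j hj)
    · have : ∑ j, μ j * δ₂ j = (∑ j, μ j * δ₁ j) + ∑ j, (if j = j₁ then (1:ZMod 3) else 0) := by
        rw [← Finset.sum_add_distrib]
        exact Finset.sum_congr rfl (fun j _ => hterm2 j)
      rw [this, hs, Finset.sum_ite_eq' Finset.univ j₁ (fun _ => (1:ZMod 3))]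
      simp

theorem core (d : ℕ) (hd : 2 ≤ d) (A : (Fin d → ZMod 3) → ℝ)
    (h0 : ∀ α, 0 ≤ A α)
    (hsum : ∀ (α : Fin d → ZMod 3) (j : Fin d),
      A (update α j 0) + A (update α j 1) + A (update α j 2) = 1) :
    ∃ P₀ P₁ P₂ : Fin d → ZMod 3, 0 < A P₀ ∧ 0 < A P₁ ∧ 0 < A P₂ ∧
      ∀ j, P₀ j ≠ P₁ j ∧ P₁ j ≠ P₂ j ∧ P₀ j ≠ P₂ j := by
  haveI : Fact (Nat.Prime 3) := ⟨by norm_num⟩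
  set i0 : Fin d := ⟨0, by omega⟩ with hi0
  set j₁ : Fin d := ⟨1, by omega⟩ with hj₁def
  have hj₁0 : j₁ ≠ i0 := by simp [hi0, hj₁def, Fin.ext_iff]
  by_contra hcon
  have NTT : ∀ P₀ P₁ P₂ : Fin d → ZMod 3,
      (∀ j, P₀ j ≠ P₁ j ∧ P₁ j ≠ P₂ j ∧ P₀ j ≠ P₂ j) →
      A P₀ = 0 ∨ A P₁ = 0 ∨ A P₂ = 0 := by
    intro P₀ P₁ P₂ hj
    by_contra hA
    push_neg at hA
    exact hcon ⟨P₀, P₁, P₂, (h0 P₀).lt_of_ne (Ne.symm hA.1), (h0 P₁).lt_of_ne (Ne.symm hA.2.1),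
      (h0 P₂).lt_of_ne (Ne.symm hA.2.2), hj⟩
  have hsum' : ∀ (α : Fin d → ZMod 3) (j : Fin d) (x y z : ZMod 3), x ≠ y → y ≠ z → x ≠ z →
      A (update α j x) + A (update α j y) + A (update α j z) = 1 := by
    intro α j x y z h1 h2 h3
    rcases zm3_perm3 x y z h1 h2 h3 with ⟨hx,hy,hz⟩|⟨hx,hy,hz⟩|⟨hx,hy,hz⟩|⟨hx,hy,hz⟩|⟨hx,hy,hz⟩|⟨hx,hy,hz⟩ <;>
      (subst hx; subst hy; subst hz; linarith [hsum α j])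
  have hpos : ∀ (α : Fin d → ZMod 3) (j : Fin d), ∃ x, 0 < A (update α j x) := by
    intro α j
    by_contra h
    push_neg at h
    have e0 := le_antisymm (h 0) (h0 _)
    have e1 := le_antisymm (h 1) (h0 _)
    have e2 := le_antisymm (h 2) (h0 _)
    linarith [hsum α j]
  have hkill : ∀ (α : Fin d → ZMod 3) (j : Fin d) (x y : ZMod 3), A (update α j x) = 1 → y ≠ x →
      A (update α j y) = 0 := by
    intro α j x y h1 hyx
    obtain ⟨h3x, h3y⟩ := zm3_third x y (Ne.symm hyx)
    have hs := hsum' α j x y (-x-y) (Ne.symm hyx) h3y h3x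
    have n1 := h0 (update α j y)
    have n2 := h0 (update α j (-x-y))
    linarith
  have hkill' : ∀ (β : Fin d → ZMod 3) (j : Fin d) (c : ZMod 3), A β = 1 → c ≠ β j →
      A (update β j c) = 0 := by
    intro β j c h1 hc
    have hb : A (update β j (β j)) = 1 := by rw [update_eq_self]; exact h1
    exact hkill β j (β j) c hb hc
  have htwo : ∀ (α : Fin d → ZMod 3) (j : Fin d) (x y : ZMod 3), A (update α j x) = 1 →
      A (update α j y) = 1 → y = x := by
    intro α j x y h1 h2
    by_contra h
    rw [hkill α j x y h1 h] at h2
    norm_num at h2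
  -- Case 3 : some fiber has full support
  have case3 : ∀ v : Fin d → ZMod 3, (∀ x, 0 < A (update v i0 x)) → False := by
    intro v hv
    have sphere : ∀ s : Fin d → ZMod 3, (∀ j, j ≠ i0 → s j ≠ v j) →
        ∃ c, A (update s i0 c) = 1 ∧ A (update (fun j => -v j - s j) i0 c) = 1 := by
      intro s hs
      set r : Fin d → ZMod 3 := fun j => -v j - s j with hr
      have hdis : ∀ (x y z : ZMod 3), x ≠ y → y ≠ z → x ≠ z →
          ∀ j, (update v i0 x) j ≠ (update s i0 y) j ∧ (update s i0 y) j ≠ (update r i0 z) j ∧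
            (update v i0 x) j ≠ (update r i0 z) j := by
        intro x y z hxy hyz hxz j
        by_cases hj : j = i0
        · subst hj; simp only [update_self]; exact ⟨hxy, hyz, hxz⟩
        · simp only [update_of_ne hj]
          obtain ⟨h1, h2⟩ := zm3_third (v j) (s j) (Ne.symm (hs j hj))
          exact ⟨Ne.symm (hs j hj), h2, h1⟩
      obtain ⟨b, hb⟩ := hpos r i0
      have key : ∀ y bb, 0 < A (update s i0 y) → 0 < A (update r i0 bb) → y = bb := by
        intro y bb hy hbb
        by_contra hyb
        obtain ⟨hxy, hxb⟩ := zm3_third y bb hyb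
        rcases NTT _ _ _ (hdis (-y-bb) y bb (Ne.symm hxy) hyb (Ne.symm hxb)) with h|h|h
        · exact absurd h (ne_of_gt (hv _))
        · exact absurd h (ne_of_gt hy)
        · exact absurd h (ne_of_gt hbb)
      obtain ⟨y0, hy0⟩ := hpos s i0
      have hsb : 0 < A (update s i0 b) := (key y0 b hy0 hb) ▸ hy0
      have hsu : A (update s i0 b) = 1 := by
        have hz1 : A (update s i0 (b+1)) = 0 := by
          by_contra h
          exact (zm3_add b).1 (key (b+1) b ((h0 _).lt_of_ne (Ne.symm h)) hb)
        have hz2 : A (update s i0 (b+2)) = 0 := by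
          by_contra h
          exact (zm3_add b).2.1 (key (b+2) b ((h0 _).lt_of_ne (Ne.symm h)) hb)
        have := hsum' s i0 b (b+1) (b+2) (Ne.symm (zm3_add b).1) (zm3_add b).2.2
          (Ne.symm (zm3_add b).2.1)
        linarith
      have hru : A (update r i0 b) = 1 := by
        have hz1 : A (update r i0 (b+1)) = 0 := by
          by_contra h
          exact (zm3_add b).1 ((key b (b+1) hsb ((h0 _).lt_of_ne (Ne.symm h))).symm)
        have hz2 : A (update r i0 (b+2)) = 0 := by
          by_contra h
          exact (zm3_add b).2.1 ((key b (b+2) hsb ((h0 _).lt_of_ne (Ne.symm h))).symm)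
        have := hsum' r i0 b (b+1) (b+2) (Ne.symm (zm3_add b).1) (zm3_add b).2.2
          (Ne.symm (zm3_add b).2.1)
        linarith
      exact ⟨b, hsu, hru⟩
    have neighbor : ∀ (j₀ : Fin d), j₀ ≠ i0 → ∀ b : ZMod 3, b ≠ v j₀ →
        ∀ c, A (update (update v j₀ b) i0 c) = 1 → False := by
      intro j₀ hj₀ b hb c hc
      have hcoord : (update (update v j₀ b) i0 c) j₀ = b := by
        rw [update_of_ne hj₀, update_self]
      have h2 : A (update (update (update v j₀ b) i0 c) j₀ (v j₀)) = 0 := by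
        apply hkill' _ j₀ _ hc
        rw [hcoord]
        exact fun h => hb h.symm
      have h3 : update (update (update v j₀ b) i0 c) j₀ (v j₀) = update v i0 c := by
        funext i
        by_cases hij : i = j₀
        · subst hij
          rw [update_self, update_of_ne hj₀]
        · rw [update_of_ne hij]
          by_cases hii : i = i0
          · subst hii; rw [update_self, update_self]
          · rw [update_of_ne hii, update_of_ne hii, update_of_ne hij]
      rw [h3] at h2
      exact absurd h2 (ne_of_gt (hv c))
    have prop3 : ∀ n : ℕ, ∀ w : Fin d → ZMod 3,
        ((Finset.univ.erase i0).filter (fun j => w j = v j)).card = n →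
        (∃ j', j' ≠ i0 ∧ w j' ≠ v j') → ∃ c, A (update w i0 c) = 1 := by
      intro n
      induction n using Nat.strong_induction_on with
      | _ n ihn =>
      intro w hcard hex
      rcases Nat.eq_zero_or_pos n with hn | hn
      · have hfe : (Finset.univ.erase i0).filter (fun j => w j = v j) = ∅ :=
          Finset.card_eq_zero.mp (by rw [hcard, hn])
        have hsph : ∀ j, j ≠ i0 → w j ≠ v j := by
          intro j hj hwj
          have hmem : j ∈ (Finset.univ.erase i0).filter (fun j => w j = v j) :=
            Finset.mem_filter.mpr ⟨Finset.mem_erase.mpr ⟨hj, Finset.mem_univ j⟩, hwj⟩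
          rw [hfe] at hmem
          exact absurd hmem (Finset.notMem_empty j)
        obtain ⟨c, hc, _⟩ := sphere w hsph
        exact ⟨c, hc⟩
      · obtain ⟨j, hjmem⟩ := Finset.card_pos.mp (by rw [hcard]; exact hn)
        have hj0 : j ≠ i0 := (Finset.mem_erase.mp (Finset.mem_filter.mp hjmem).1).1
        have hjv : w j = v j := (Finset.mem_filter.mp hjmem).2
        obtain ⟨j', hj'0, hj'v⟩ := hex
        have hjj' : j' ≠ j := fun h => hj'v (h ▸ hjv)
        have hstep : ∀ b : ZMod 3, b ≠ v j → ∃ c, A (update (update w j b) i0 c) = 1 := by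
          intro b hbv
          apply ihn (n-1) (by omega) (update w j b)
          · have hfe : (Finset.univ.erase i0).filter (fun i => (update w j b) i = v i) =
                ((Finset.univ.erase i0).filter (fun i => w i = v i)).erase j := by
              ext i
              simp only [Finset.mem_filter, Finset.mem_erase, Finset.mem_univ, true_and]
              constructor
              · rintro ⟨hi0, hiv⟩
                by_cases hij : i = j
                · subst hij; rw [update_self] at hiv; exact absurd hiv hbv
                · rw [update_of_ne hij] at hiv; exact ⟨hij, hi0, hiv⟩
              · rintro ⟨hij, hi0, hiv⟩
                exact ⟨hi0, by rw [update_of_ne hij]; exact hiv⟩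
            rw [hfe, Finset.card_erase_of_mem hjmem, hcard]
          · exact ⟨j', hj'0, by rw [update_of_ne hjj']; exact hj'v⟩
        obtain ⟨c1, hc1⟩ := hstep (v j + 1) (zm3_add (v j)).1
        obtain ⟨c2, hc2⟩ := hstep (v j + 2) (zm3_add (v j)).2.1
        have hswap : ∀ (b c : ZMod 3), update (update w j b) i0 c = update (update w i0 c) j b :=
          fun b c => update_comm hj0 b c w
        have h1 : A (update (update w i0 c1) j (v j + 1)) = 1 := by rw [← hswap]; exact hc1
        have h2 : A (update (update w i0 c2) j (v j + 2)) = 1 := by rw [← hswap]; exact hc2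
        have hcc : c1 ≠ c2 := by
          intro he
          rw [← he] at h2
          exact (zm3_add (v j)).2.2 (htwo (update w i0 c1) j _ _ h2 h1)
        have heqpt : ∀ c : ZMod 3, update (update w i0 c) j (v j) = update w i0 c := by
          intro c
          have : v j = (update w i0 c) j := by rw [update_of_ne hj0]; exact hjv.symm
          rw [this, update_eq_self]
        have hz1 : A (update w i0 c1) = 0 := by
          have := hkill (update w i0 c1) j (v j + 1) (v j) h1 (Ne.symm (zm3_add (v j)).1)
          rwa [heqpt c1] at this
        have hz2 : A (update w i0 c2) = 0 := by
          have := hkill (update w i0 c2) j (v j + 2) (v j) h2 (Ne.symm (zm3_add (v j)).2.1)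
          rwa [heqpt c2] at this
        obtain ⟨ht1, ht2⟩ := zm3_third c1 c2 hcc
        have hsum3 := hsum' w i0 (-c1-c2) c1 c2 (Ne.symm ht1) hcc (Ne.symm ht2)
        exact ⟨-c1-c2, by linarith⟩
    have hgex : ∃ j', j' ≠ i0 ∧ (update v j₁ (v j₁ + 1)) j' ≠ v j' :=
      ⟨j₁, hj₁0, by rw [update_self]; exact (zm3_add (v j₁)).1⟩
    obtain ⟨c, hcu⟩ := prop3 _ (update v j₁ (v j₁ + 1)) rfl hgex
    exact neighbor j₁ hj₁0 (v j₁ + 1) (zm3_add (v j₁)).1 c hcu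
  
  -- Case 2 : some fiber has exactly two positive entries
  have case2 : ∀ (v : Fin d → ZMod 3) (t : ZMod 3), A (update v i0 t) = 0 →
      (∀ x, x ≠ t → 0 < A (update v i0 x)) → False := by
    intro v t ht0 htpos
    have hyt : t + 1 ≠ t := (zm3_add t).1
    have hzt : t + 2 ≠ t := (zm3_add t).2.1
    have hyz : t + 1 ≠ t + 2 := (zm3_add t).2.2
    have hyp := htpos (t+1) hyt
    have hzp := htpos (t+2) hzt
    have sphere2 : ∀ s : Fin d → ZMod 3, (∀ j, j ≠ i0 → s j ≠ v j) →
        A (update s i0 t) = 0 ∨ A (update s i0 t) = 1 := by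
      intro s hs
      rcases (h0 (update s i0 t)).eq_or_lt with h | h
      · exact Or.inl h.symm
      right
      set r : Fin d → ZMod 3 := fun j => -v j - s j with hr
      have hdis : ∀ (x y z : ZMod 3), x ≠ y → y ≠ z → x ≠ z →
          ∀ j, (update v i0 x) j ≠ (update s i0 y) j ∧ (update s i0 y) j ≠ (update r i0 z) j ∧
            (update v i0 x) j ≠ (update r i0 z) j := by
        intro x y z hxy hyz' hxz j
        by_cases hj : j = i0
        · subst hj; simp only [update_self]; exact ⟨hxy, hyz', hxz⟩
        · simp only [update_of_ne hj]
          obtain ⟨h1, h2⟩ := zm3_third (v j) (s j) (Ne.symm (hs j hj))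
          exact ⟨Ne.symm (hs j hj), h2, h1⟩
      have hrz : A (update r i0 (t+2)) = 0 := by
        rcases NTT _ _ _ (hdis (t+1) t (t+2) hyt (Ne.symm hzt) hyz) with hh|hh|hh
        · exact absurd hh (ne_of_gt hyp)
        · exact absurd hh (ne_of_gt h)
        · exact hh
      have hry : A (update r i0 (t+1)) = 0 := by
        rcases NTT _ _ _ (hdis (t+2) t (t+1) hzt (Ne.symm hyt) (Ne.symm hyz)) with hh|hh|hh
        · exact absurd hh (ne_of_gt hzp)
        · exact absurd hh (ne_of_gt h)
        · exact hh
      have hrt : A (update r i0 t) = 1 := by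
        have := hsum' r i0 t (t+1) (t+2) (Ne.symm hyt) hyz (Ne.symm hzt)
        linarith
      have hsz : A (update s i0 (t+2)) = 0 := by
        rcases NTT _ _ _ (hdis (t+1) (t+2) t hyz hzt hyt) with hh|hh|hh
        · exact absurd hh (ne_of_gt hyp)
        · exact hh
        · exfalso; rw [hrt] at hh; norm_num at hh
      have hsy : A (update s i0 (t+1)) = 0 := by
        rcases NTT _ _ _ (hdis (t+2) (t+1) t (Ne.symm hyz) hyt hzt) with hh|hh|hh
        · exact absurd hh (ne_of_gt hzp)
        · exact hh
        · exfalso; rw [hrt] at hh; norm_num at hh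
      have := hsum' s i0 t (t+1) (t+2) (Ne.symm hyt) hyz (Ne.symm hzt)
      linarith
    have hAt01 : ∀ w : Fin d → ZMod 3, A (update w i0 t) = 0 ∨ A (update w i0 t) = 1 := by
      have prop2 : ∀ n : ℕ, ∀ w : Fin d → ZMod 3,
          ((Finset.univ.erase i0).filter (fun j => w j = v j)).card = n →
          (∃ j', j' ≠ i0 ∧ w j' ≠ v j') →
          A (update w i0 t) = 0 ∨ A (update w i0 t) = 1 := by
        intro n
        induction n using Nat.strong_induction_on with
        | _ n ihn =>
        intro w hcard hex
        rcases Nat.eq_zero_or_pos n with hn | hn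
        · have hfe : (Finset.univ.erase i0).filter (fun j => w j = v j) = ∅ :=
            Finset.card_eq_zero.mp (by rw [hcard, hn])
          have hsph : ∀ j, j ≠ i0 → w j ≠ v j := by
            intro j hj hwj
            have hmem : j ∈ (Finset.univ.erase i0).filter (fun j => w j = v j) :=
              Finset.mem_filter.mpr ⟨Finset.mem_erase.mpr ⟨hj, Finset.mem_univ j⟩, hwj⟩
            rw [hfe] at hmem
            exact absurd hmem (Finset.notMem_empty j)
          exact sphere2 w hsph
        · obtain ⟨j, hjmem⟩ := Finset.card_pos.mp (by rw [hcard]; exact hn)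
          have hj0 : j ≠ i0 := (Finset.mem_erase.mp (Finset.mem_filter.mp hjmem).1).1
          have hjv : w j = v j := (Finset.mem_filter.mp hjmem).2
          obtain ⟨j', hj'0, hj'v⟩ := hex
          have hjj' : j' ≠ j := fun h => hj'v (h ▸ hjv)
          have hstep : ∀ b : ZMod 3, b ≠ v j →
              A (update (update w j b) i0 t) = 0 ∨ A (update (update w j b) i0 t) = 1 := by
            intro b hbv
            apply ihn (n-1) (by omega) (update w j b)
            · have hfe : (Finset.univ.erase i0).filter (fun i => (update w j b) i = v i) =
                  ((Finset.univ.erase i0).filter (fun i => w i = v i)).erase j := by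
                ext i
                simp only [Finset.mem_filter, Finset.mem_erase, Finset.mem_univ, true_and]
                constructor
                · rintro ⟨hi0, hiv⟩
                  by_cases hij : i = j
                  · subst hij; rw [update_self] at hiv; exact absurd hiv hbv
                  · rw [update_of_ne hij] at hiv; exact ⟨hij, hi0, hiv⟩
                · rintro ⟨hij, hi0, hiv⟩
                  exact ⟨hi0, by rw [update_of_ne hij]; exact hiv⟩
              rw [hfe, Finset.card_erase_of_mem hjmem, hcard]
            · exact ⟨j', hj'0, by rw [update_of_ne hjj']; exact hj'v⟩
          have hswap : ∀ (b c : ZMod 3), update (update w j b) i0 c = update (update w i0 c) j b :=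
            fun b c => update_comm hj0 b c w
          have hA1 := hstep (v j + 1) (zm3_add (v j)).1
          have hA2 := hstep (v j + 2) (zm3_add (v j)).2.1
          rw [hswap] at hA1 hA2
          have hline := hsum' (update w i0 t) j (v j) (v j + 1) (v j + 2)
            (Ne.symm (zm3_add (v j)).1) (zm3_add (v j)).2.2 (Ne.symm (zm3_add (v j)).2.1)
          have heqpt : update (update w i0 t) j (v j) = update w i0 t := by
            have : v j = (update w i0 t) j := by rw [update_of_ne hj0]; exact hjv.symm
            rw [this, update_eq_self]
          rw [heqpt] at hline
          have hnn := h0 (update w i0 t)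
          rcases hA1 with h1|h1 <;> rcases hA2 with h2|h2
          · right; linarith
          · left; linarith
          · left; linarith
          · exfalso; linarith
      intro w
      by_cases hex : ∃ j', j' ≠ i0 ∧ w j' ≠ v j'
      · exact prop2 _ w rfl hex
      · push_neg at hex
        left
        have : update w i0 t = update v i0 t := by
          funext i
          by_cases hi : i = i0
          · subst hi; rw [update_self, update_self]
          · rw [update_of_ne hi, update_of_ne hi]; exact hex i hi
        rw [this]; exact ht0
    -- the unique unit on each j₁-line
    have hEx : ∀ β : Fin d → ZMod 3, ∃ x, A (update (update β j₁ x) i0 t) = 1 ∧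
        ∀ x', A (update (update β j₁ x') i0 t) = 1 → x' = x := by
      intro β
      have hswap : ∀ (b c : ZMod 3), update (update β j₁ b) i0 c = update (update β i0 c) j₁ b :=
        fun b c => update_comm hj₁0 b c β
      have h01 : ∀ x, A (update (update β i0 t) j₁ x) = 0 ∨
          A (update (update β i0 t) j₁ x) = 1 := by
        intro x
        have := hAt01 (update β j₁ x)
        rwa [hswap] at this
      have hline := hsum' (update β i0 t) j₁ 0 1 2 zm3_012.1 zm3_012.2.1 zm3_012.2.2
      have hone : A (update (update β i0 t) j₁ 0) = 1 ∨ A (update (update β i0 t) j₁ 1) = 1 ∨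
          A (update (update β i0 t) j₁ 2) = 1 := by
        rcases h01 0 with ha|ha <;> rcases h01 1 with hb|hb <;> rcases h01 2 with hc|hc <;>
          first
            | (exfalso; linarith)
            | tauto
      rcases hone with hu|hu|hu
      · exact ⟨0, by rw [hswap]; exact hu, fun x' hx' => htwo _ j₁ _ _ hu (by rwa [hswap] at hx')⟩
      · exact ⟨1, by rw [hswap]; exact hu, fun x' hx' => htwo _ j₁ _ _ hu (by rwa [hswap] at hx')⟩
      · exact ⟨2, by rw [hswap]; exact hu, fun x' hx' => htwo _ j₁ _ _ hu (by rwa [hswap] at hx')⟩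
    choose g hg1 hg2 using hEx
    have hg0 : ∀ β x, g (update β i0 x) = g β := by
      intro β x
      apply hg2 β
      have h := hg1 (update β i0 x)
      have he : ∀ u : ZMod 3, update (update (update β i0 x) j₁ u) i0 t =
          update (update β j₁ u) i0 t := by
        intro u
        rw [show update (update β i0 x) j₁ u = update (update β j₁ u) i0 x from
          update_comm (Ne.symm hj₁0) x u β, update_idem]
      rwa [he] at h
    have hgj : ∀ β x, g (update β j₁ x) = g β := by
      intro β x
      apply hg2 β
      have h := hg1 (update β j₁ x)
      rwa [show update (update β j₁ x) j₁ (g (update β j₁ x)) =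
        update β j₁ (g (update β j₁ x)) by rw [update_idem]] at h
    set G : (Fin d → ZMod 3) → ZMod 3 := fun β => g β + β i0 + β j₁ with hG
    have hGlatin : ∀ (β : Fin d → ZMod 3) (j : Fin d),
        Function.Injective (fun x => G (update β j x)) := by
      intro β j x1 x2 h12
      simp only [hG] at h12
      by_cases hj : j = i0
      · subst hj
        rw [hg0, hg0, update_self, update_self, update_of_ne hj₁0, update_of_ne hj₁0] at h12
        exact add_left_cancel (add_right_cancel h12)
      · by_cases hjj : j = j₁
        · subst hjj
          rw [hgj, hgj, update_self, update_self,
            update_of_ne (Ne.symm hj₁0), update_of_ne (Ne.symm hj₁0)] at h12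
          exact add_left_cancel h12
        · have hi0j : i0 ≠ j := fun h => hj h.symm
          have hj₁j : j₁ ≠ j := fun h => hjj h.symm
          rw [update_of_ne hi0j, update_of_ne hi0j, update_of_ne hj₁j, update_of_ne hj₁j] at h12
          have hge : g (update β j x1) = g (update β j x2) :=
            add_right_cancel (add_right_cancel h12)
          by_contra hne
          have u1 := hg1 (update β j x1)
          have u2 := hg1 (update β j x2)
          rw [hge] at u1
          set e := g (update β j x2) with hedef
          have hpt : update (update (update β j x2) j₁ e) i0 t =
              update (update (update (update β j x1) j₁ e) i0 t) j x2 := by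
            funext i
            by_cases hi : i = i0
            · subst hi
              rw [update_self, update_of_ne hi0j, update_self]
            · rw [update_of_ne hi]
              by_cases hij₁ : i = j₁
              · subst hij₁
                rw [update_self, update_of_ne hj₁j, update_of_ne hi, update_self]
              · rw [update_of_ne hij₁]
                by_cases hij : i = j
                · subst hij
                  rw [update_self, update_self]
                · rw [update_of_ne hij, update_of_ne hij, update_of_ne hi,
                    update_of_ne hij₁, update_of_ne hij]
          rw [hpt] at u2
          have hPj : (update (update (update β j x1) j₁ e) i0 t) j = x1 := by
            rw [update_of_ne (fun h => hj h), update_of_ne (fun h => hjj h), update_self]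
          have hzero := hkill' (update (update (update β j x1) j₁ e) i0 t) j x2 u1
            (by rw [hPj]; exact fun h => hne h.symm)
          rw [hzero] at u2
          norm_num at u2
    obtain ⟨cG, η, hη, hGrep⟩ := lin d G hGlatin
    set β₀ : Fin d → ZMod 3 := fun _ => 0 with hβ₀
    have hsum_single : ∀ (jj : Fin d) (a : ZMod 3),
        ∑ i, η i * (update β₀ jj a) i = η jj * a := by
      intro jj a
      rw [Finset.sum_eq_single jj]
      · rw [update_self]
      · intro b _ hb
        rw [update_of_ne hb]
        simp [hβ₀]
      · intro hb; exact absurd (Finset.mem_univ jj) hb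
    have hG0 : G β₀ = cG := by
      have h := hGrep β₀
      have hz : ∑ i, η i * β₀ i = 0 := by simp [hβ₀]
      rw [hz, add_zero] at h
      exact h
    have hηi0 : η i0 = 1 := by
      have h1 := hGrep (update β₀ i0 1)
      rw [hsum_single i0 1, mul_one] at h1
      have h2 : G (update β₀ i0 1) = G β₀ + 1 := by
        simp only [hG, hg0, update_self, update_of_ne hj₁0]
        simp only [hβ₀]
        ring
      have : cG + η i0 = cG + 1 := by rw [← h1, h2, hG0]
      exact add_left_cancel this
    have hηj₁ : η j₁ = 1 := by
      have h1 := hGrep (update β₀ j₁ 1)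
      rw [hsum_single j₁ 1, mul_one] at h1
      have h2 : G (update β₀ j₁ 1) = G β₀ + 1 := by
        simp only [hG, hgj, update_self, update_of_ne (Ne.symm hj₁0)]
        simp only [hβ₀]
        ring
      have : cG + η j₁ = cG + 1 := by rw [← h1, h2, hG0]
      exact add_left_cancel this
    have hmem : ∀ β : Fin d → ZMod 3, (A (update β i0 t) = 1 ↔ β j₁ = g β) := by
      intro β
      constructor
      · intro h
        apply hg2 β
        rw [show update β j₁ (β j₁) = β from update_eq_self j₁ β]
        exact h
      · intro h
        have hh := hg1 β
        rw [← h, update_eq_self j₁ β] at hh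
        exact hh
    have hgrep : ∀ β, g β = cG + (∑ i, η i * β i) - β i0 - β j₁ := by
      intro β
      have h := hGrep β
      simp only [hG] at h
      linear_combination h
    set μ : Fin d → ZMod 3 := fun i => if i = i0 then 0 else if i = j₁ then 2 else η i with hμ
    have hμs : ∀ β : Fin d → ZMod 3, ∑ i, μ i * β i = (∑ i, η i * β i) - β i0 + β j₁ := by
      intro β
      have hterm : ∀ i, μ i * β i =
          η i * β i - (if i = i0 then β i0 else 0) + (if i = j₁ then β j₁ else 0) := by
        intro i
        by_cases hi : i = i0
        · subst hi
          simp [hμ, Ne.symm hj₁0, hηi0]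
        · by_cases hij : i = j₁
          · subst hij
            simp [hμ, hi, hηj₁]
            ring
          · simp [hμ, hi, hij]

      rw [Finset.sum_congr rfl (fun i _ => hterm i)]
      rw [Finset.sum_add_distrib, Finset.sum_sub_distrib]
      rw [Finset.sum_ite_eq' Finset.univ i0 (fun _ => β i0),
        Finset.sum_ite_eq' Finset.univ j₁ (fun _ => β j₁)]
      simp
    have hmem2 : ∀ β : Fin d → ZMod 3, (A (update β i0 t) = 1 ↔ ∑ i, μ i * β i = -cG) := by
      intro β
      rw [hmem β, hgrep β, hμs β]
      exact zm3_mem (∑ i, η i * β i) (β i0) (β j₁) cG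
    have hμi0 : μ i0 = 0 := by simp [hμ]
    have hμne : ∀ j, j ≠ i0 → μ j ≠ 0 := by
      intro j hj
      by_cases hjj : j = j₁
      · simp only [hμ, if_neg hj, if_pos hjj]
        exact zm3_2ne0
      · simp only [hμ, if_neg hj, if_neg hjj]
        exact hη j
    obtain ⟨δ, hδ0, hδne, hδsum⟩ := delta6 d i0 j₁ hj₁0 μ hμi0 hμne
    have hPsum : ∑ i, μ i * (fun ii => v ii + δ ii) i =
        (∑ i, μ i * v i) + ∑ i, μ i * δ i := by
      rw [← Finset.sum_add_distrib]
      exact Finset.sum_congr rfl (fun i _ => by ring)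
    have hRsum : ∑ i, μ i * (fun ii => v ii - δ ii) i =
        (∑ i, μ i * v i) - ∑ i, μ i * δ i := by
      rw [← Finset.sum_sub_distrib]
      exact Finset.sum_congr rfl (fun i _ => by ring)
    have hsv : ∑ i, μ i * v i ≠ -cG := by
      intro h
      have hh := (hmem2 v).mpr h
      rw [ht0] at hh
      norm_num at hh
    have hdisgen : ∀ (p q : Fin d → ZMod 3), (∀ j, j ≠ i0 → p j ≠ v j ∧ v j ≠ q j ∧ p j ≠ q j) →
        ∀ (x y z : ZMod 3), x ≠ y → y ≠ z → x ≠ z → ∀ j,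
        (update p i0 x) j ≠ (update v i0 y) j ∧ (update v i0 y) j ≠ (update q i0 z) j ∧
        (update p i0 x) j ≠ (update q i0 z) j := by
      intro p q hpq x y z hxy hyz' hxz j
      by_cases hj : j = i0
      · subst hj; simp only [update_self]; exact ⟨hxy, hyz', hxz⟩
      · simp only [update_of_ne hj]
        exact hpq j hj
    have hforce : ∀ (P R : Fin d → ZMod 3),
        A (update P i0 t) = 1 → A (update R i0 t) = 0 →
        (∀ j, j ≠ i0 → P j ≠ v j ∧ v j ≠ R j ∧ P j ≠ R j) → False := by
      intro P R hPt hRt hdisj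
      have hforce1 : ∀ a, 0 < A (update v i0 a) → ∀ b, 0 < A (update R i0 b) → a = b := by
        intro a ha b hbb
        have hat : a ≠ t := by
          rintro rfl
          rw [ht0] at ha
          exact lt_irrefl 0 ha
        have hbt : b ≠ t := by
          rintro rfl
          rw [hRt] at hbb
          exact lt_irrefl 0 hbb
        by_contra hab
        rcases NTT _ _ _ (hdisgen P R hdisj t a b (Ne.symm hat) hab (Ne.symm hbt)) with hh|hh|hh
        · rw [hPt] at hh; norm_num at hh
        · exact absurd hh (ne_of_gt ha)
        · exact absurd hh (ne_of_gt hbb)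
      obtain ⟨b0, hb0⟩ := hpos R i0
      exact hyz ((hforce1 (t+1) hyp b0 hb0).trans (hforce1 (t+2) hzp b0 hb0).symm)
    rcases zm3_cover (∑ i, μ i * v i) (∑ i, μ i * δ i) (-cG) hδsum hsv with hc | hc
    · -- P = v + δ, R = v - δ
      have hPt : A (update (fun ii => v ii + δ ii) i0 t) = 1 :=
        (hmem2 _).mpr (by rw [hPsum, hc])
      have hRt : A (update (fun ii => v ii - δ ii) i0 t) = 0 := by
        rcases hAt01 (fun ii => v ii - δ ii) with h|h
        · exact h
        · exfalso
          have hh := (hmem2 _).mp h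
          rw [hRsum] at hh
          exact zm3_two _ hδsum (∑ i, μ i * v i) (by rw [hc, hh])
      apply hforce (fun ii => v ii + δ ii) (fun ii => v ii - δ ii) hPt hRt
      intro j hj
      obtain ⟨ha, hb', hc'⟩ := zm3_shift2 (v j) (δ j) (hδne j hj)
      exact ⟨ha, Ne.symm hb', hc'⟩
    · -- P = v - δ, R = v + δ
      have hPt : A (update (fun ii => v ii - δ ii) i0 t) = 1 :=
        (hmem2 _).mpr (by rw [hRsum, hc])
      have hRt : A (update (fun ii => v ii + δ ii) i0 t) = 0 := by
        rcases hAt01 (fun ii => v ii + δ ii) with h|h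
        · exact h
        · exfalso
          have hh := (hmem2 _).mp h
          rw [hPsum] at hh
          exact zm3_two _ hδsum (∑ i, μ i * v i) (by rw [hh, hc])
      apply hforce (fun ii => v ii - δ ii) (fun ii => v ii + δ ii) hPt hRt
      intro j hj
      obtain ⟨ha, hb', hc'⟩ := zm3_shift2 (v j) (δ j) (hδne j hj)
      exact ⟨hb', Ne.symm ha, Ne.symm hc'⟩
  
  -- Every fiber is a singleton
  have hsing : ∀ β : Fin d → ZMod 3, ∃ x, A (update β i0 x) = 1 := by
    intro β
    rcases (h0 (update β i0 0)).eq_or_lt with h00 | h00 <;>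
      rcases (h0 (update β i0 1)).eq_or_lt with h01 | h01 <;>
        rcases (h0 (update β i0 2)).eq_or_lt with h02 | h02
    · exfalso; linarith [hsum β i0]
    · exact ⟨2, by linarith [hsum β i0]⟩
    · exact ⟨1, by linarith [hsum β i0]⟩
    · exact absurd (case2 β 0 h00.symm (fun x hx => by
        rcases zm3_cases x with rfl|rfl|rfl
        · exact absurd rfl hx
        · exact h01
        · exact h02)) not_false
    · exact ⟨0, by linarith [hsum β i0]⟩
    · exact absurd (case2 β 1 h01.symm (fun x hx => by
        rcases zm3_cases x with rfl|rfl|rfl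
        · exact h00
        · exact absurd rfl hx
        · exact h02)) not_false
    · exact absurd (case2 β 2 h02.symm (fun x hx => by
        rcases zm3_cases x with rfl|rfl|rfl
        · exact h00
        · exact h01
        · exact absurd rfl hx)) not_false
    · exact absurd (case3 β (fun x => by
        rcases zm3_cases x with rfl|rfl|rfl
        · exact h00
        · exact h01
        · exact h02)) not_false
  choose φ hφ using hsing
  have hφ0 : ∀ β x, φ (update β i0 x) = φ β := by
    intro β x
    have h1 := hφ (update β i0 x)
    rw [update_idem] at h1
    exact htwo β i0 (φ β) _ (hφ β) h1
  set G : (Fin d → ZMod 3) → ZMod 3 := fun β => φ β + β i0 with hG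
  have hGlatin : ∀ (β : Fin d → ZMod 3) (j : Fin d),
      Function.Injective (fun x => G (update β j x)) := by
    intro β j x1 x2 h12
    simp only [hG] at h12
    by_cases hj : j = i0
    · subst hj
      rw [hφ0, hφ0, update_self, update_self] at h12
      exact add_left_cancel h12
    · have hi0j : i0 ≠ j := fun h => hj h.symm
      rw [update_of_ne hi0j, update_of_ne hi0j] at h12
      have hφe : φ (update β j x1) = φ (update β j x2) := add_right_cancel h12
      by_contra hne
      have u1 := hφ (update β j x1)
      have u2 := hφ (update β j x2)
      rw [← hφe] at u2
      have hpt : update (update β j x2) i0 (φ (update β j x1)) =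
          update (update (update β j x1) i0 (φ (update β j x1))) j x2 := by
        funext i
        by_cases hi : i = i0
        · subst hi
          rw [update_self, update_of_ne hi0j, update_self]
        · rw [update_of_ne hi]
          by_cases hij : i = j
          · subst hij; rw [update_self, update_self]
          · rw [update_of_ne hij, update_of_ne hij, update_of_ne hi, update_of_ne hij]
      rw [hpt] at u2
      have hPj : (update (update β j x1) i0 (φ (update β j x1))) j = x1 := by
        rw [update_of_ne (fun h => hj h), update_self]
      have hz := hkill' (update (update β j x1) i0 (φ (update β j x1))) j x2 u1
        (by rw [hPj]; exact fun h => hne h.symm)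
      rw [hz] at u2
      norm_num at u2
  obtain ⟨cG, η, hη, hGrep⟩ := lin d G hGlatin
  set β₀ : Fin d → ZMod 3 := fun _ => 0 with hβ₀
  have hsum_single : ∀ (jj : Fin d) (a : ZMod 3),
      ∑ i, η i * (update β₀ jj a) i = η jj * a := by
    intro jj a
    rw [Finset.sum_eq_single jj]
    · rw [update_self]
    · intro b _ hb
      rw [update_of_ne hb]; simp [hβ₀]
    · intro hb; exact absurd (Finset.mem_univ jj) hb
  have hG0 : G β₀ = cG := by
    have h := hGrep β₀
    have hz : ∑ i, η i * β₀ i = 0 := by simp [hβ₀]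
    rw [hz, add_zero] at h
    exact h
  have hηi0 : η i0 = 1 := by
    have h1 := hGrep (update β₀ i0 1)
    rw [hsum_single i0 1, mul_one] at h1
    have h2 : G (update β₀ i0 1) = G β₀ + 1 := by
      simp only [hG, hφ0, update_self]
      simp only [hβ₀]
      ring
    have : cG + η i0 = cG + 1 := by rw [← h1, h2, hG0]
    exact add_left_cancel this
  have hφrep : ∀ β, φ β = cG + (∑ i, η i * β i) - β i0 := by
    intro β
    have h := hGrep β
    simp only [hG] at h
    linear_combination h
  have hsupp : ∀ β : Fin d → ZMod 3, φ β = β i0 → 0 < A β := by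
    intro β h
    have h1 := hφ β
    rw [h, update_eq_self] at h1
    rw [h1]; norm_num
  set ν : Fin d → ZMod 3 := fun i => if i = i0 then 0 else η i with hν
  have hνi0 : ν i0 = 0 := by simp [hν]
  have hνne : ∀ j, j ≠ i0 → ν j ≠ 0 := by
    intro j hj; simp only [hν, if_neg hj]; exact hη j
  obtain ⟨δ, hδ0, hδne, hδsum⟩ := delta6 d i0 j₁ hj₁0 ν hνi0 hνne
  set w : ZMod 3 := ∑ i, ν i * δ i with hw
  have hηδ : ∑ i, η i * δ i = w := by
    rw [hw]
    apply Finset.sum_congr rfl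
    intro i _
    by_cases hi : i = i0
    · subst hi; rw [hδ0]; simp
    · simp [hν, hi]
  set δ' : Fin d → ZMod 3 := update δ i0 w with hδ'
  have hδ'ne : ∀ j, δ' j ≠ 0 := by
    intro j
    by_cases hj : j = i0
    · subst hj; rw [hδ', update_self]; exact hδsum
    · rw [hδ', update_of_ne hj]; exact hδne j hj
  have hηδ' : ∑ i, η i * δ' i = w + w := by
    have hterm : ∀ i, η i * δ' i = η i * δ i + (if i = i0 then w else 0) := by
      intro i
      by_cases hi : i = i0
      · subst hi; rw [hδ', update_self, hδ0, hηi0]; simp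
      · rw [hδ', update_of_ne hi]; simp [hi]
    rw [Finset.sum_congr rfl (fun i _ => hterm i), Finset.sum_add_distrib, hηδ,
      Finset.sum_ite_eq' Finset.univ i0 (fun _ => w)]
    simp
  set v₀ : Fin d → ZMod 3 := update β₀ i0 cG with hv₀
  have hv₀rep : ∑ i, η i * v₀ i = cG := by
    rw [hv₀, hsum_single i0 cG, hηi0, one_mul]
  have hQpos : ∀ s : ZMod 3, 0 < A (fun i => v₀ i + s * δ' i) := by
    intro s
    apply hsupp
    rw [hφrep]
    show cG + (∑ i, η i * (v₀ i + s * δ' i)) - (v₀ i0 + s * δ' i0) = v₀ i0 + s * δ' i0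
    have hsplit : ∑ i, η i * (v₀ i + s * δ' i) = cG + s * (w + w) := by
      have hterm : ∀ i, η i * (v₀ i + s * δ' i) =
          η i * v₀ i + s * (η i * δ' i) := fun i => by ring
      rw [Finset.sum_congr rfl (fun i _ => hterm i), Finset.sum_add_distrib,
        hv₀rep, ← Finset.mul_sum, hηδ']
    have hc0 : v₀ i0 + s * δ' i0 = cG + s * w := by
      rw [hv₀, update_self, hδ', update_self]
    rw [hsplit, hc0]
    ring
  apply hcon
  refine ⟨(fun i => v₀ i + 0 * δ' i), (fun i => v₀ i + 1 * δ' i), (fun i => v₀ i + 2 * δ' i),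
    hQpos 0, hQpos 1, hQpos 2, ?_⟩
  intro j
  obtain ⟨hA1, hA2, hA3⟩ := zm3_shift (v₀ j) (δ' j) (hδ'ne j)
  refine ⟨?_, ?_, ?_⟩
  · simpa using hA1
  · simpa using hA2
  · simpa using hA3

/-- A multidimensional matrix is polystochastic if all entries are nonnegative
and the sum over every line (all coordinates fixed but one) equals 1. -/
def Polystochastic {d n : ℕ} (A : (Fin d → Fin n) → ℝ) : Prop :=
  (∀ α, 0 ≤ A α) ∧
    ∀ (α : Fin d → Fin n) (j : Fin d), ∑ x : Fin n, A (Function.update α j x) = 1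

/-- The permanent of a `d`-dimensional matrix of order `n` (`d > 0`): the sum
over all tuples of permutations whose first component is the identity (i.e.
over all diagonals `(i, σ₂ i, …, σ_d i)`) of the products of the entries. -/
def mper {d n : ℕ} (A : (Fin d → Fin n) → ℝ) (hd : 0 < d) : ℝ :=
  ∑ σ ∈ Finset.univ.filter
      (fun σ : Fin d → Equiv.Perm (Fin n) => σ ⟨0, hd⟩ = 1),
    ∏ i : Fin n, A (fun j => σ j i)

/-- Every `d`-dimensional polystochastic matrix of order 3 (`d ≥ 2`) has a
strictly positive permanent. -/
theorem polystochastic_order3_perm_pos (d : ℕ) (hd : 2 ≤ d)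
    (A : (Fin d → Fin 3) → ℝ) (hA : Polystochastic A) :
    0 < mper A (by omega) := by
  obtain ⟨h0, hline⟩ := hA
  have hsum : ∀ (α : Fin d → Fin 3) (j : Fin d),
      A (update α j 0) + A (update α j 1) + A (update α j 2) = 1 := by
    intro α j
    have h := hline α j
    rwa [Fin.sum_univ_three (fun x => A (update α j x))] at h
  obtain ⟨P₀, P₁, P₂, hp0, hp1, hp2, hdis⟩ := core d hd A h0 hsum
  set F : Fin 3 → (Fin d → Fin 3) := fun k => if k = 0 then P₀ else if k = 1 then P₁ else P₂
    with hF
  have hF0 : F 0 = P₀ := rfl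
  have hF1 : F 1 = P₁ := rfl
  have hF2 : F 2 = P₂ := rfl
  have hcinj : ∀ j, Function.Injective (fun k => F k j) := by
    intro j
    obtain ⟨d1, d2, d3⟩ := hdis j
    exact inj3 _ d1 d2 d3
  have hbij : ∀ j, Function.Bijective (fun k => F k j) :=
    fun j => Finite.injective_iff_bijective.mp (hcinj j)
  set π : Fin d → Equiv.Perm (Fin 3) := fun j => Equiv.ofBijective _ (hbij j) with hπ
  set i0 : Fin d := ⟨0, by omega⟩ with hi0
  set σ : Fin d → Equiv.Perm (Fin 3) := fun j => π j * (π i0)⁻¹ with hσ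
  have hσ0 : σ i0 = 1 := mul_inv_cancel (π i0)
  unfold mper
  apply Finset.sum_pos'
  · intro τ _
    exact Finset.prod_nonneg (fun i _ => h0 _)
  · refine ⟨σ, Finset.mem_filter.mpr ⟨Finset.mem_univ _, hσ0⟩, ?_⟩
    apply Finset.prod_pos
    intro i _
    have hpt : (fun j => σ j i) = F ((π i0)⁻¹ i) := funext fun j => rfl
    rw [hpt]
    rcases f3_cases ((π i0)⁻¹ i) with h|h|h <;> rw [h]
    · rw [hF0]; exact hp0
    · rw [hF1]; exact hp1
    · rw [hF2]; exact hp2
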